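/- Let B and X be Gödel hoops (i.e. basic hoops satisfying x · x = x) and let (f, g) be a strong external action of B on X satisfying condition (B2) (equivalently, a strong external action in the variety of basic hoops). Then the associated hoop Y' = {(x, b) ∈ X × B | f_b(x) = x}, with operations (x, b) → (y, b') = (g_{b'→b}(x → y), b → b') and (x, b) · (y, b') = (f_{b·b'}(x · y), b · b'), is a Gödel hoop; in particular (x, b) · (x, b) = (x, b) for all (x, b) ∈ Y'. Consequently, in any split extension with strong section of basic hoops whose kernel X and cokernel B are Gödel hoops, the middle object is a Gödel hoop. -/
import Mathlib


class Hoop (α : Type*) extends CommMonoid α, HImp α where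
  himp_self : ∀ x : α, x ⇨ x = 1
  mul_himp_comm : ∀ x y : α, x * (x ⇨ y) = y * (y ⇨ x)
  mul_himp_assoc : ∀ x y z : α, (x * y) ⇨ z = x ⇨ (y ⇨ z)

/-- A basic hoop: a hoop satisfying `((x → y) → z) → (((y → x) → z) → z) = 1`. -/
class BasicHoop (α : Type*) extends Hoop α where
  basic : ∀ x y z : α, ((x ⇨ y) ⇨ z) ⇨ (((y ⇨ x) ⇨ z) ⇨ z) = 1

/-- A Gödel hoop: a basic hoop satisfying the idempotency `x · x = x`. -/
class GodelHoop (α : Type*) extends BasicHoop α where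
  idem : ∀ x : α, x * x = x

/-- The multiplication of the semidirect product of a strong external action. -/
def Amul {B X : Type*} [Hoop B] [Hoop X] (f : B → X → X) (q r : X × B) : X × B :=
  (f (q.2 * r.2) (q.1 * r.1), q.2 * r.2)

/-- The implication of the semidirect product of a strong external action. -/
def Aimp {B X : Type*} [Hoop B] [Hoop X] (g : B → X → X) (q r : X × B) : X × B :=
  (g (r.2 ⇨ q.2) (q.1 ⇨ r.1), q.2 ⇨ r.2)

/-- Membership in `Y' = {(x,b) ∈ X × B | f_b(x) = x}`. -/
def memY {B X : Type*} [Hoop B] [Hoop X] (f : B → X → X) (q : X × B) : Prop :=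
  f q.2 q.1 = q.1

namespace HoopAux

variable {α : Type*} [Hoop α]

open Hoop

lemma himp_one_himp (c x : α) : c ⇨ (1 ⇨ x) = c ⇨ x := by
  rw [← mul_himp_assoc, mul_one]

lemma himp_one_himp_self (x : α) : x ⇨ ((1 : α) ⇨ x) = 1 := by
  rw [himp_one_himp, Hoop.himp_self]

lemma one_himp_himp_self (x : α) : ((1 : α) ⇨ x) ⇨ x = 1 := by
  have h1 : x * (x ⇨ 1) = 1 ⇨ x := by
    rw [mul_himp_comm, one_mul]
  have h2 : (1 : α) = x ⇨ ((x ⇨ 1) ⇨ (x * (x ⇨ 1))) := by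
    rw [← mul_himp_assoc, Hoop.himp_self]
  rw [h1, himp_one_himp, ← mul_himp_assoc, h1] at h2
  exact h2.symm

lemma one_himp (x : α) : (1 : α) ⇨ x = x := by
  have h := mul_himp_comm ((1 : α) ⇨ x) x
  rw [one_himp_himp_self, himp_one_himp_self, mul_one, mul_one] at h
  exact h

lemma himp_right (x y : α) : y ⇨ (x ⇨ y) = x ⇨ 1 := by
  rw [← mul_himp_assoc, mul_comm, mul_himp_assoc, Hoop.himp_self]

lemma himp_one (x : α) : x ⇨ (1 : α) = 1 := by
  have hx : x * (x ⇨ 1) = x := by rw [mul_himp_comm, one_mul, one_himp]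
  have h1 : x ⇨ (x ⇨ 1) = x ⇨ 1 := by
    have h := mul_himp_assoc x (x ⇨ 1) (x ⇨ 1)
    rw [hx, Hoop.himp_self] at h
    exact h
  have h2 := himp_right x (x ⇨ 1)
  rw [h1, Hoop.himp_self] at h2
  exact h2.symm

lemma himp_himp_self (x y : α) : x ⇨ (y ⇨ x) = 1 := by
  rw [himp_right, himp_one]

end HoopAux

theorem stmt15 {B X : Type*} [GodelHoop B] [GodelHoop X] (f g : B → X → X)
    (E1f : ∀ b : B, f b 1 = 1) (E1g : ∀ b : B, g b 1 = 1)
    (E2f : ∀ x : X, f 1 x = x) (E2g : ∀ x : X, g 1 x = x)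
    (E3 : ∀ (b₁ b₂ : B) (x y : X),
      f (b₁ * b₂) (x * g b₁ (x ⇨ y)) = f (b₁ * b₂) (x * (x ⇨ y)))
    (E4 : ∀ (b₁ b₂ b₃ : B) (x y z : X),
      g (b₃ ⇨ (b₁ * b₂)) (f (b₁ * b₂) (x * y) ⇨ z)
        = g ((b₂ ⇨ b₃) ⇨ b₁) (x ⇨ g (b₃ ⇨ b₂) (y ⇨ z)))
    (B2 : ∀ (b₁ b₂ b₃ : B) (x y z : X),
      g ((((b₂ ⇨ b₁) ⇨ b₃) ⇨ b₃) ⇨ ((b₁ ⇨ b₂) ⇨ b₃))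
          (g (b₃ ⇨ (b₁ ⇨ b₂)) (g (b₂ ⇨ b₁) (x ⇨ y) ⇨ z) ⇨
            (g (b₃ ⇨ (b₂ ⇨ b₁)) (g (b₁ ⇨ b₂) (y ⇨ x) ⇨ z) ⇨ z)) = 1) :
    -- Y' satisfies the basic-hoop identity
    (∀ u v w : X × B, memY f u → memY f v → memY f w →
      Aimp g (Aimp g (Aimp g u v) w)
          (Aimp g (Aimp g (Aimp g v u) w) w) = ((1 : X), (1 : B))) ∧
    -- Y' is idempotent
    (∀ q : X × B, memY f q → Amul f q q = q) ∧
    -- the middle object of a split extension with strong section of basic hoops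
    -- with Gödel kernel and cokernel is a Gödel hoop
    (∀ (A B' : Type) (_ : BasicHoop A) (_ : BasicHoop B')
        (p : A → B') (s : B' → A),
      p 1 = 1 → (∀ a a' : A, p (a * a') = p a * p a') →
      (∀ a a' : A, p (a ⇨ a') = p a ⇨ p a') →
      s 1 = 1 → (∀ b b' : B', s (b * b') = s b * s b') →
      (∀ b b' : B', s (b ⇨ b') = s b ⇨ s b') →
      (∀ b : B', p (s b) = b) →
      (∀ (a : A) (b : B'), a ⇨ s b = s (p a) ⇨ s b) →
      (∀ a : A, p a = 1 → a * a = a) →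
      (∀ b : B', b * b = b) →
      ∀ a : A, a * a = a) := by
  refine ⟨?_, ?_, ?_⟩
  · intro u v w _ _ _
    simp only [Aimp]
    refine Prod.ext ?_ ?_
    · show g _ _ = _
      rw [HoopAux.himp_himp_self w.2 (v.2 ⇨ u.2), E2g]
      exact B2 u.2 v.2 w.2 u.1 v.1 w.1
    · exact BasicHoop.basic u.2 v.2 w.2
  · intro q hq
    simp only [Amul, GodelHoop.idem]
    exact Prod.ext hq rfl
  · intro A B' hA hB' p s hp1 hpmul hpimp hs1 hsmul hsimp hps hstrong hker hidem a
    have key : s (p a) * (s (p a) ⇨ a) = a := by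
      rw [Hoop.mul_himp_comm, hstrong a (p a), ← hsimp, Hoop.himp_self, hs1, mul_one]
    have hx : p (s (p a) ⇨ a) = 1 := by rw [hpimp, hps, Hoop.himp_self]
    have hxx := hker _ hx
    have hss : s (p a) * s (p a) = s (p a) := by rw [← hsmul, hidem]
    calc a * a = (s (p a) * (s (p a) ⇨ a)) * (s (p a) * (s (p a) ⇨ a)) := by rw [key]
      _ = (s (p a) * s (p a)) * ((s (p a) ⇨ a) * (s (p a) ⇨ a)) := mul_mul_mul_comm _ _ _ _
      _ = s (p a) * (s (p a) ⇨ a) := by rw [hss, hxx]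
      _ = a := key
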